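/- Let f : 2^Ω → ℝ_{≥0} be a monotone nondecreasing submodular set function with f(∅) = 0 on a finite ground set Ω, and k ≥ 1. Let G_k be the set produced by the greedy algorithm that starts from ∅ and repeatedly adds an element maximizing the marginal increase of f, for k steps. Then f(G_k) ≥ (1 − (1−1/k)^k) · max_{|W| ≤ k} f(W) ≥ (1 − 1/e) · max_{|W| ≤ k} f(W). -/
import Mathlib


noncomputable section
open Finset

lemma marg_sum {Ω : Type*} [DecidableEq Ω]
    (f : Finset Ω → ℝ)
    (hsub : ∀ X Y : Finset Ω, X ⊆ Y → ∀ x ∉ Y,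
      f (insert x Y) - f Y ≤ f (insert x X) - f X)
    (W : Finset Ω) : ∀ S : Finset Ω,
    f (S ∪ W) - f S ≤ ∑ x ∈ W, (f (insert x S) - f S) := by
  induction W using Finset.induction with
  | empty => intro S; simp
  | @insert a W' ha ih =>
    intro S
    rw [Finset.sum_insert ha]
    have heq : S ∪ insert a W' = insert a (S ∪ W') := Finset.union_insert a S W'
    have h1 : f (insert a (S ∪ W')) - f (S ∪ W') ≤ f (insert a S) - f S := by
      by_cases haS : a ∈ S
      · have e1 : insert a (S ∪ W') = S ∪ W' :=
          Finset.insert_eq_self.mpr (Finset.mem_union_left _ haS)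
        have e2 : insert a S = S := Finset.insert_eq_self.mpr haS
        rw [e1, e2]; simp
      · have hx : a ∉ S ∪ W' := by simp [haS, ha]
        exact hsub S (S ∪ W') Finset.subset_union_left a hx
    have h2 := ih S
    rw [heq]
    linarith

theorem greedy_submodular_guarantee (Ω : Type*) [Fintype Ω] [DecidableEq Ω] [Nonempty Ω]
    (f : Finset Ω → ℝ)
    (hmono : ∀ X Y : Finset Ω, X ⊆ Y → f X ≤ f Y)
    (hsub : ∀ X Y : Finset Ω, X ⊆ Y → ∀ x ∉ Y,
      f (insert x Y) - f Y ≤ f (insert x X) - f X)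
    (h0 : f ∅ = 0) (k : ℕ) (hk : 1 ≤ k)
    (G : ℕ → Finset Ω) (hG0 : G 0 = ∅)
    (hGstep : ∀ j, ∃ x, G (j + 1) = insert x (G j) ∧
      ∀ y, f (insert y (G j)) ≤ f (insert x (G j))) :
    ∀ W : Finset Ω, W.card ≤ k →
      (1 - 1 / Real.exp 1) * f W ≤ (1 - (1 - 1 / (k : ℝ)) ^ k) * f W ∧
      (1 - (1 - 1 / (k : ℝ)) ^ k) * f W ≤ f (G k) := by
  intro W hW
  have hfW0 : 0 ≤ f W := by
    have := hmono ∅ W (Finset.empty_subset W); linarith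
  have hk0 : (0:ℝ) < k := by exact_mod_cast Nat.lt_of_lt_of_le Nat.zero_lt_one hk
  have hkk : (0:ℝ) ≤ 1 - 1/(k:ℝ) := by
    rw [sub_nonneg, div_le_one hk0]; exact_mod_cast hk
  have hstep : ∀ j, f W - f (G j) ≤ k * (f (G (j+1)) - f (G j)) := by
    intro j
    obtain ⟨x, hx, hxmax⟩ := hGstep j
    have h1 : f W ≤ f (G j ∪ W) := hmono _ _ Finset.subset_union_right
    have h2 := marg_sum f hsub W (G j)
    have hδ : 0 ≤ f (G (j+1)) - f (G j) := by
      have hsubset : G j ⊆ G (j+1) := by rw [hx]; exact Finset.subset_insert _ _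
      linarith [hmono _ _ hsubset]
    have h3 : ∑ y ∈ W, (f (insert y (G j)) - f (G j)) ≤
        (W.card : ℝ) * (f (G (j+1)) - f (G j)) := by
      rw [← nsmul_eq_mul]
      apply Finset.sum_le_card_nsmul
      intro y _
      have := hxmax y
      rw [hx]; linarith
    have h4 : (W.card : ℝ) * (f (G (j+1)) - f (G j)) ≤ k * (f (G (j+1)) - f (G j)) := by
      apply mul_le_mul_of_nonneg_right _ hδ
      exact_mod_cast hW
    linarith
  have main : ∀ j, f W - f (G j) ≤ (1 - 1/(k:ℝ))^j * f W := by
    intro j; induction j with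
    | zero => simp [hG0, h0]
    | succ j ih =>
      have h := hstep j
      have key : f W - f (G (j+1)) ≤ (1 - 1/(k:ℝ)) * (f W - f (G j)) := by
        have h' : (f W - f (G j)) / k ≤ f (G (j+1)) - f (G j) := by
          rw [div_le_iff₀ hk0]; linarith
        have e : (1 - 1/(k:ℝ)) * (f W - f (G j))
            = (f W - f (G j)) - (f W - f (G j))/k := by ring
        rw [e]; linarith
      calc f W - f (G (j+1)) ≤ (1 - 1/(k:ℝ)) * (f W - f (G j)) := key
        _ ≤ (1 - 1/(k:ℝ)) * ((1 - 1/(k:ℝ))^j * f W) :=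
            mul_le_mul_of_nonneg_left ih hkk
        _ = (1 - 1/(k:ℝ))^(j+1) * f W := by ring
  have hfin := main k
  constructor
  · apply mul_le_mul_of_nonneg_right _ hfW0
    have hpe : (1 - 1/(k:ℝ))^k ≤ 1 / Real.exp 1 := by
      have h1 : 1 - 1/(k:ℝ) ≤ Real.exp (-(1/(k:ℝ))) := by
        linarith [Real.add_one_le_exp (-(1/(k:ℝ)))]
      have h2 : (1 - 1/(k:ℝ))^k ≤ Real.exp (-(1/(k:ℝ)))^k :=
        pow_le_pow_left₀ hkk h1 k
      rw [← Real.exp_nat_mul] at h2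
      have e : (k:ℝ) * (-(1/(k:ℝ))) = -1 := by field_simp
      rw [e, Real.exp_neg] at h2
      simpa [one_div] using h2
    linarith
  · linarith
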